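/- Let Q be an n×n Hermitian matrix, P an arbitrary n×n matrix, r ∈ ℂⁿ, and z = E + iη with η > 0. Then |tr(((Q - zI)⁻¹ - (Q + r r* - zI)⁻¹) P)| ≤ ‖P‖/η, where ‖P‖ is the operator norm. -/

import Mathlib

open Matrix

noncomputable def nsq {n : ℕ} (x : Fin n → ℂ) : ℝ := ∑ i, Complex.normSq (x i)

lemma star_dot_self {n : ℕ} (x : Fin n → ℂ) : star x ⬝ᵥ x = (nsq x : ℂ) := by
  simp [dotProduct, nsq, Pi.star_apply, Complex.normSq_eq_conj_mul_self]

lemma nsq_nonneg {n : ℕ} (x : Fin n → ℂ) : 0 ≤ nsq x :=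
  Finset.sum_nonneg fun i _ => Complex.normSq_nonneg _

lemma nsq_eq_zero {n : ℕ} {x : Fin n → ℂ} (h : nsq x = 0) : x = 0 := by
  funext i
  have := (Finset.sum_eq_zero_iff_of_nonneg (fun i _ => Complex.normSq_nonneg (x i))).mp h i
    (Finset.mem_univ i)
  simpa [Complex.normSq_eq_zero] using this

lemma herm_dot_im {n : ℕ} {M : Matrix (Fin n) (Fin n) ℂ} (hM : M.IsHermitian)
    (x : Fin n → ℂ) : (star x ⬝ᵥ M *ᵥ x).im = 0 := by
  have h1 : star (star x ⬝ᵥ M *ᵥ x) = star x ⬝ᵥ M *ᵥ x := by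
    rw [← star_dotProduct, star_mulVec, ← dotProduct_mulVec, hM.eq]
  have := congrArg Complex.im h1
  simp only [Complex.star_def, Complex.conj_im] at this
  linarith

lemma isUnit_herm_sub {n : ℕ} {M : Matrix (Fin n) (Fin n) ℂ} (hM : M.IsHermitian)
    {z : ℂ} (hz : z.im ≠ 0) : IsUnit (M - z • (1 : Matrix (Fin n) (Fin n) ℂ)) := by
  rw [← Matrix.mulVec_injective_iff_isUnit]
  have key : ∀ w : Fin n → ℂ, (M - z • 1) *ᵥ w = 0 → w = 0 := by
    intro w hw
    have hMw : M *ᵥ w = z • w := by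
      have := hw
      rw [sub_mulVec, sub_eq_zero] at this
      rw [this, smul_mulVec, one_mulVec]
    have hdot : star w ⬝ᵥ M *ᵥ w = z * (nsq w : ℂ) := by
      rw [hMw, dotProduct_smul, star_dot_self, smul_eq_mul]
    have him := herm_dot_im hM w
    rw [hdot] at him
    simp only [Complex.mul_im, Complex.ofReal_re, Complex.ofReal_im, mul_zero, add_zero,
      zero_add] at him
    have : nsq w = 0 := by
      rcases mul_eq_zero.mp him with h | h
      · exact absurd h hz
      · exact h
    exact nsq_eq_zero this
  intro x y hxy
  have : (M - z • 1) *ᵥ (x - y) = 0 := by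
    rw [mulVec_sub, hxy, sub_self]
  have := key _ this
  exact sub_eq_zero.mp this

lemma vecMulVec_mulVec' {n : ℕ} (a s x : Fin n → ℂ) :
    vecMulVec a s *ᵥ x = (s ⬝ᵥ x) • a := by
  funext i
  simp only [mulVec, dotProduct, vecMulVec_apply, Pi.smul_apply, smul_eq_mul]
  rw [Finset.sum_mul]
  exact Finset.sum_congr rfl fun j _ => by ring

lemma mul_vecMulVec' {n : ℕ} (M : Matrix (Fin n) (Fin n) ℂ) (a s : Fin n → ℂ) :
    M * vecMulVec a s = vecMulVec (M *ᵥ a) s := by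
  ext i j
  simp only [mul_apply, vecMulVec_apply, mulVec, dotProduct]
  rw [Finset.sum_mul]
  exact Finset.sum_congr rfl fun k _ => by ring

lemma vecMulVec_mul' {n : ℕ} (a s : Fin n → ℂ) (M : Matrix (Fin n) (Fin n) ℂ) :
    vecMulVec a s * M = vecMulVec a (s ᵥ* M) := by
  ext i j
  simp only [mul_apply, vecMulVec_apply, vecMul, dotProduct]
  rw [Finset.mul_sum]
  exact Finset.sum_congr rfl fun k _ => by ring

lemma trace_vecMulVec' {n : ℕ} (a b : Fin n → ℂ) :
    Matrix.trace (vecMulVec a b) = b ⬝ᵥ a := by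
  simp only [Matrix.trace, Matrix.diag, vecMulVec_apply, dotProduct]
  exact Finset.sum_congr rfl fun i _ => mul_comm _ _

lemma isHermitian_vecMulVec_star {n : ℕ} (r : Fin n → ℂ) :
    (vecMulVec r (star r)).IsHermitian := by
  ext i j
  simp only [conjTranspose_apply, vecMulVec_apply, Pi.star_apply, star_mul', star_star]
  exact mul_comm _ _

theorem trace_resolvent_rank_one_perturbation (n : ℕ) (Q P : Matrix (Fin n) (Fin n) ℂ)
    (hQ : Q.IsHermitian) (r : Fin n → ℂ) (z : ℂ) (hz : 0 < z.im) :
    ‖Matrix.trace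
        (((Q - z • (1 : Matrix (Fin n) (Fin n) ℂ))⁻¹
          - (Q + vecMulVec r (star r) - z • (1 : Matrix (Fin n) (Fin n) ℂ))⁻¹) * P)‖
      ≤ ‖Matrix.toEuclideanCLM (𝕜 := ℂ) P‖ / z.im := by
  have hzne : z.im ≠ 0 := ne_of_gt hz
  set R : Matrix (Fin n) (Fin n) ℂ := vecMulVec r (star r) with hR
  set A := Q - z • (1 : Matrix (Fin n) (Fin n) ℂ) with hAdef
  set B := Q + R - z • (1 : Matrix (Fin n) (Fin n) ℂ) with hBdef
  have hBherm : (Q + R).IsHermitian := hQ.add (isHermitian_vecMulVec_star r)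
  have hA : IsUnit A := isUnit_herm_sub hQ hzne
  have hB : IsUnit B := isUnit_herm_sub hBherm hzne
  have hAdet := (Matrix.isUnit_iff_isUnit_det A).mp hA
  have hBdet := (Matrix.isUnit_iff_isUnit_det B).mp hB
  have hAinv : A⁻¹ * A = 1 := nonsing_inv_mul A hAdet
  have hAinv' : A * A⁻¹ = 1 := mul_nonsing_inv A hAdet
  have hBinv : B⁻¹ * B = 1 := nonsing_inv_mul B hBdet
  have hBinv' : B * B⁻¹ = 1 := mul_nonsing_inv B hBdet
  set u := A⁻¹ *ᵥ r with hu
  have hru : A *ᵥ u = r := by rw [hu, mulVec_mulVec, hAinv', one_mulVec]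
  by_cases hu0 : u = 0
  · have hr0 : r = 0 := by rw [← hru, hu0, mulVec_zero]
    have hR0 : R = 0 := by
      ext i j; simp [hR, vecMulVec_apply, hr0]
    have hBA : B = A := by rw [hBdef, hAdef, hR0, add_zero]
    rw [hBA, sub_self, zero_mul, trace_zero, norm_zero]
    positivity
  · set α := star r ⬝ᵥ u with hα
    have hnsq : 0 < nsq u :=
      lt_of_le_of_ne (nsq_nonneg u) fun h => hu0 (nsq_eq_zero h.symm)
    have hAH : Aᴴ = Q - (starRingEnd ℂ z) • (1 : Matrix (Fin n) (Fin n) ℂ) := by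
      rw [hAdef]
      simp [conjTranspose_sub, conjTranspose_smul, hQ.eq]
    have hαim : α.im = z.im * nsq u := by
      have hstarr : star r = star u ᵥ* Aᴴ := by rw [← hru, star_mulVec]
      have hexp : α = star u ⬝ᵥ Q *ᵥ u - (starRingEnd ℂ z) * (nsq u : ℂ) := by
        rw [hα, hstarr, ← dotProduct_mulVec, hAH, sub_mulVec, dotProduct_sub,
          smul_mulVec, one_mulVec, dotProduct_smul, star_dot_self, smul_eq_mul]
      have him := herm_dot_im hQ u
      rw [hexp]
      simp only [Complex.sub_im, him, Complex.mul_im, Complex.ofReal_re, Complex.ofReal_im,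
        Complex.conj_re, Complex.conj_im, mul_zero, zero_sub, neg_mul]
      ring
    have hden_im : ((1 : ℂ) + α).im = z.im * nsq u := by
      simp [Complex.add_im, hαim]
    have hden_ne : (1 : ℂ) + α ≠ 0 := by
      intro h
      rw [h] at hden_im
      simp only [Complex.zero_im] at hden_im
      exact absurd hden_im.symm (by positivity)
    have hBu : B *ᵥ u = (1 + α) • r := by
      have hBA' : B = A + R := by rw [hBdef, hAdef]; abel
      rw [hBA', add_mulVec, hru, hR, vecMulVec_mulVec', ← hα, add_smul, one_smul]
    have hBinvr : B⁻¹ *ᵥ r = (1 + α)⁻¹ • u := by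
      have h1 : B⁻¹ *ᵥ (B *ᵥ u) = u := by rw [mulVec_mulVec, hBinv, one_mulVec]
      rw [hBu, mulVec_smul] at h1
      rw [← h1, smul_smul, inv_mul_cancel₀ hden_ne, one_smul]
    have hres : A⁻¹ - B⁻¹ = B⁻¹ * R * A⁻¹ := by
      have hBA : B - A = R := by rw [hBdef, hAdef]; abel
      calc A⁻¹ - B⁻¹ = B⁻¹ * B * A⁻¹ - B⁻¹ * (A * A⁻¹) := by
            rw [hBinv, hAinv', one_mul, mul_one]
        _ = B⁻¹ * (B - A) * A⁻¹ := by noncomm_ring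
        _ = B⁻¹ * R * A⁻¹ := by rw [hBA]
    set v := (Aᴴ)⁻¹ *ᵥ r with hv
    have hw : star v = star r ᵥ* A⁻¹ := by
      rw [hv, star_mulVec, conjTranspose_nonsing_inv, conjTranspose_conjTranspose]
    have htr : Matrix.trace ((A⁻¹ - B⁻¹) * P)
        = (1 + α)⁻¹ * (star v ⬝ᵥ (P *ᵥ u)) := by
      rw [hres, hR, mul_assoc, mul_vecMulVec', hBinvr, vecMulVec_mul', trace_vecMulVec',
        dotProduct_smul, smul_eq_mul]
      congr 1
      rw [← vecMul_vecMul, ← hw, ← dotProduct_mulVec]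
    -- normality of A and equality of norms
    have hAAH : A * Aᴴ = Aᴴ * A := by
      rw [hAH, hAdef]
      simp only [sub_mul, mul_sub, Matrix.smul_mul, Matrix.mul_smul, one_mul, mul_one,
        smul_smul]
      rw [mul_comm z ((starRingEnd ℂ) z)]
      abel
    have hns : nsq v = nsq u := by
      have h1 : (nsq v : ℂ) = star r ⬝ᵥ (A⁻¹ * (Aᴴ)⁻¹) *ᵥ r := by
        rw [← star_dot_self v, hw, hv, dotProduct_mulVec, vecMul_vecMul, ← dotProduct_mulVec]
      have h2 : (nsq u : ℂ) = star r ⬝ᵥ ((Aᴴ)⁻¹ * A⁻¹) *ᵥ r := by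
        have hsu : star u = star r ᵥ* (Aᴴ)⁻¹ := by
          rw [hu, star_mulVec, conjTranspose_nonsing_inv]
        rw [← star_dot_self u, hsu, hu, dotProduct_mulVec, vecMul_vecMul, ← dotProduct_mulVec]
      have h3 : A⁻¹ * (Aᴴ)⁻¹ = (Aᴴ)⁻¹ * A⁻¹ := by
        rw [← Matrix.mul_inv_rev, ← Matrix.mul_inv_rev, hAAH]
      rw [h3, ← h2] at h1
      exact_mod_cast h1
    -- Euclidean space bounds
    set u' : EuclideanSpace ℂ (Fin n) := (WithLp.equiv 2 _).symm u with hu'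
    set v' : EuclideanSpace ℂ (Fin n) := (WithLp.equiv 2 _).symm v with hv'
    have hnorm_eq : ∀ x : Fin n → ℂ,
        ‖((WithLp.equiv 2 (Fin n → ℂ)).symm x : EuclideanSpace ℂ (Fin n))‖
          = Real.sqrt (nsq x) := by
      intro x
      rw [EuclideanSpace.norm_eq]
      congr 1
      exact Finset.sum_congr rfl fun i _ => by
        simp [Complex.sq_norm]
    set C := ‖Matrix.toEuclideanCLM (𝕜 := ℂ) P‖ with hC
    have hCnn : 0 ≤ C := norm_nonneg _
    have hPu : Matrix.toEuclideanCLM (𝕜 := ℂ) P u'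
        = (WithLp.equiv 2 (Fin n → ℂ)).symm (P *ᵥ u) := by
      rw [hu']; exact toEuclideanCLM_toLp P u
    have hnum : ‖star v ⬝ᵥ (P *ᵥ u)‖ ≤ C * nsq u := by
      have hinner : (inner ℂ v' ((WithLp.equiv 2 (Fin n → ℂ)).symm (P *ᵥ u)) : ℂ)
          = star v ⬝ᵥ (P *ᵥ u) := (EuclideanSpace.inner_toLp_toLp v (P *ᵥ u)).trans (dotProduct_comm _ _)
      calc ‖star v ⬝ᵥ (P *ᵥ u)‖
          = ‖(inner ℂ v' ((WithLp.equiv 2 (Fin n → ℂ)).symm (P *ᵥ u)) : ℂ)‖ := by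
            rw [hinner]
        _ ≤ ‖v'‖ * ‖((WithLp.equiv 2 (Fin n → ℂ)).symm (P *ᵥ u) : EuclideanSpace ℂ (Fin n))‖ :=
            norm_inner_le_norm _ _
        _ = ‖v'‖ * ‖Matrix.toEuclideanCLM (𝕜 := ℂ) P u'‖ := by rw [hPu]
        _ ≤ ‖v'‖ * (C * ‖u'‖) := by
            exact mul_le_mul_of_nonneg_left ((Matrix.toEuclideanCLM (𝕜 := ℂ) P).le_opNorm u')
              (norm_nonneg _)
        _ = C * (‖v'‖ * ‖u'‖) := by ring
        _ = C * nsq u := by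
            rw [hv', hu', hnorm_eq, hnorm_eq, hns, Real.mul_self_sqrt (nsq_nonneg u)]
    have habs_den : z.im * nsq u ≤ ‖1 + α‖ := by
      have h1 := Complex.abs_im_le_norm (1 + α)
      rw [hden_im] at h1
      exact le_trans (le_abs_self _) h1
    have hdpos : (0 : ℝ) < z.im * nsq u := by positivity
    rw [htr, norm_mul, norm_inv]
    calc (‖1 + α‖)⁻¹ * ‖star v ⬝ᵥ (P *ᵥ u)‖
        ≤ (z.im * nsq u)⁻¹ * (C * nsq u) := by
          apply mul_le_mul _ hnum (norm_nonneg _) (by positivity)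
          exact inv_anti₀ hdpos habs_den
      _ = C / z.im := by
          field_simp
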